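/- Let V ⊆ S be an inclusion of valuation domains such that the maximal ideal of V is nonzero, inducing an inclusion K ⊆ L of their fraction fields. Then S is a content V-algebra if and only if the induced group homomorphism K×/V× → L×/S× between the value groups (induced by the inclusion of unit groups K× ⊆ L×) is an isomorphism. -/

import Mathlib

section OhmRushDefs

variable {R S : Type*} [CommRing R] [CommRing S]

/-- The Ohm–Rush content of an element `s` of an `R`-algebra `S` (given by a ring
homomorphism `f : R →+* S`): the intersection of all ideals `I` of `R` with `s ∈ IS`. -/
def ORContent (f : R →+* S) (s : S) : Ideal R :=
  sInf {I : Ideal R | s ∈ Ideal.map f I}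

/-- `S` is an Ohm–Rush `R`-algebra if every `s ∈ S` lies in the extension of its content. -/
def IsOhmRushAlgebra (f : R →+* S) : Prop :=
  ∀ s : S, s ∈ Ideal.map f (ORContent f s)

/-- Flatness of a ring homomorphism. -/
def RingHomFlat (f : R →+* S) : Prop :=
  letI := f.toAlgebra; Module.Flat R S

/-- Faithful flatness of a ring homomorphism. -/
def RingHomFaithfullyFlat (f : R →+* S) : Prop :=
  letI := f.toAlgebra; Module.FaithfullyFlat R S

/-- Module-freeness of a ring homomorphism. -/
def RingHomFree (f : R →+* S) : Prop :=
  letI := f.toAlgebra; Module.Free R S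

/-- Weak content algebra: Ohm–Rush and `√c(fg) = √(c(f)c(g))`. -/
def IsWeakContentAlgebra (f : R →+* S) : Prop :=
  IsOhmRushAlgebra f ∧ ∀ s t : S,
    (ORContent f (s * t)).radical = (ORContent f s * ORContent f t).radical

/-- Semicontent algebra: faithfully flat Ohm–Rush, and for every multiplicative subset `W`
of `R`, if `c(s)R_W = R_W` then `c(st)R_W = c(t)R_W`. -/
def IsSemicontentAlgebra (f : R →+* S) : Prop :=
  IsOhmRushAlgebra f ∧ RingHomFaithfullyFlat f ∧
    ∀ (W : Submonoid R) (s t : S),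
      Ideal.map (algebraMap R (Localization W)) (ORContent f s) = ⊤ →
      Ideal.map (algebraMap R (Localization W)) (ORContent f (s * t)) =
        Ideal.map (algebraMap R (Localization W)) (ORContent f t)

/-- Content algebra: faithfully flat Ohm–Rush satisfying the Dedekind–Mertens type formula. -/
def IsContentAlgebra (f : R →+* S) : Prop :=
  IsOhmRushAlgebra f ∧ RingHomFaithfullyFlat f ∧
    ∀ s t : S, ∃ n : ℕ, 0 < n ∧
      ORContent f s ^ n * ORContent f t = ORContent f s ^ (n - 1) * ORContent f (s * t)

/-- A ring homomorphism satisfies INC if comparable primes of `S` with the same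
contraction to `R` are equal. -/
def SatisfiesINC (f : R →+* S) : Prop :=
  ∀ Q Q' : Ideal S, Q.IsPrime → Q'.IsPrime → Q ≤ Q' →
    Ideal.comap f Q = Ideal.comap f Q' → Q = Q'

/-- A valuation domain: a domain whose divisibility is total. -/
def IsValuationDomain (A : Type*) [CommRing A] : Prop :=
  IsDomain A ∧ ∀ a b : A, ∃ c : A, a * c = b ∨ b * c = a

/-- A Prüfer domain: a domain whose localization at every maximal ideal is a
valuation domain. -/
def IsPruferDomain (A : Type*) [CommRing A] : Prop :=
  IsDomain A ∧ ∀ (P : Ideal A) (hP : P.IsMaximal),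
    haveI := hP.isPrime
    IsValuationDomain (Localization.AtPrime P)

end OhmRushDefs


/-! ### Auxiliary machinery for the proof -/

set_option linter.unusedSectionVars false
set_option maxHeartbeats 1000000

open TensorProduct in
private lemma flat_of_principal_torsionfree {R : Type*} {M : Type*} [CommRing R] [AddCommGroup M]
    [Module R M] (hprin : ∀ I : Ideal R, I.FG → ∃ a, I = Ideal.span {a})
    (htf : ∀ (a : R) (m : M), a • m = 0 → a = 0 ∨ m = 0) : Module.Flat R M := by
  rw [Module.Flat.iff_lift_lsmul_comp_subtype_injective]
  intro I hI
  obtain ⟨a, rfl⟩ := hprin I hI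
  by_cases ha : a = 0
  · subst ha
    haveI : Subsingleton ↥(Ideal.span {(0:R)}) := by
      constructor
      intro x y
      obtain ⟨r, hr⟩ := Ideal.mem_span_singleton'.mp x.2
      obtain ⟨r', hr'⟩ := Ideal.mem_span_singleton'.mp y.2
      apply Subtype.ext
      rw [← hr, ← hr', mul_zero, mul_zero]
    haveI : Subsingleton (↥(Ideal.span {(0:R)}) ⊗[R] M) := inferInstance
    exact fun x y _ => Subsingleton.elim x y
  · have haI : a ∈ Ideal.span {a} := Ideal.subset_span rfl
    set g : M →ₗ[R] ↥(Ideal.span {a}) ⊗[R] M :=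
      TensorProduct.mk R (↥(Ideal.span {a})) M ⟨a, haI⟩ with hgdef
    have hg : Function.Surjective g := by
      intro z
      induction z using TensorProduct.induction_on with
      | zero => exact ⟨0, map_zero g⟩
      | tmul x m =>
        obtain ⟨r, hr⟩ := Ideal.mem_span_singleton'.mp x.2
        refine ⟨r • m, ?_⟩
        have hx : x = r • (⟨a, haI⟩ : Ideal.span {a}) := Subtype.ext (by simpa using hr.symm)
        show (⟨a, haI⟩ : Ideal.span {a}) ⊗ₜ[R] (r • m) = x ⊗ₜ m
        rw [hx, smul_tmul]
      | add u v hu hv =>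
        obtain ⟨mu, rfl⟩ := hu
        obtain ⟨mv, rfl⟩ := hv
        exact ⟨mu + mv, map_add g mu mv⟩
    intro x y hxy
    obtain ⟨mx, rfl⟩ := hg x
    obtain ⟨my, rfl⟩ := hg y
    have hl : ∀ m : M,
        TensorProduct.lift ((LinearMap.lsmul R M).comp (Ideal.span {a}).subtype) (g m)
          = a • m := fun m => rfl
    have hz : a • (mx - my) = 0 := by
      rw [smul_sub, ← hl, ← hl, hxy, sub_self]
    rcases htf _ _ hz with h | h
    · exact absurd h ha
    · rw [sub_eq_zero.mp h]

section ORBasic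
variable {R S0 : Type*} [CommRing R] [CommRing S0] (f : R →+* S0)

private lemma orContent_le {I : Ideal R} {s : S0} (h : s ∈ Ideal.map f I) :
    ORContent f s ≤ I :=
  sInf_le h

private lemma mem_orContent {b : R} {s : S0} (h : ∀ I : Ideal R, s ∈ Ideal.map f I → b ∈ I) :
    b ∈ ORContent f s :=
  Submodule.mem_sInf.mpr h

private lemma le_orContent {J : Ideal R} {s : S0} (h : ∀ I : Ideal R, s ∈ Ideal.map f I → J ≤ I) :
    J ≤ ORContent f s :=
  le_sInf h

end ORBasic

namespace ContentAux

variable {K L : Type*} [Field K] [Field L] [Algebra K L]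
variable {V : ValuationSubring K} {S : ValuationSubring L}

lemma mem_unitGroup_iff_mem (A : ValuationSubring K) (x : Kˣ) :
    x ∈ A.unitGroup ↔ (x : K) ∈ A ∧ ((x⁻¹ : Kˣ) : K) ∈ A := by
  constructor
  · intro h
    have h1 := (ValuationSubring.mem_unitGroup_iff A x).mp h
    constructor
    · exact A.mem_of_valuation_le_one _ h1.le
    · apply A.mem_of_valuation_le_one
      rw [Units.val_inv_eq_inv_val, map_inv₀, h1, inv_one]
  · rintro ⟨h1, h2⟩
    rw [ValuationSubring.mem_unitGroup_iff]
    have v1 : A.valuation x ≤ 1 := (A.valuation_le_one_iff _).mpr h1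
    have v2 : A.valuation ((x : K)⁻¹) ≤ 1 := by
      rw [← Units.val_inv_eq_inv_val]
      exact (A.valuation_le_one_iff _).mpr h2
    rw [map_inv₀] at v2
    have hx0 : A.valuation x ≠ 0 := by
      simp [Valuation.ne_zero_iff, x.ne_zero]
    refine le_antisymm v1 ?_
    exact (inv_le_one₀ (zero_lt_iff.mpr hx0)).mp v2

variable (F : ↥V →+* ↥S.toSubring)

/-- Compatibility of `F` with the coercions. -/
def Compat : Prop := ∀ a : ↥V, ((F a : ↥S.toSubring) : L) = algebraMap K L (a : K)

variable (V S) in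
/-- `V` is the full preimage of `S`. -/
def Star (V : ValuationSubring K) (S : ValuationSubring L) : Prop :=
  ∀ k : K, algebraMap K L k ∈ S → k ∈ V

variable {F}

lemma F_inj (hF : Compat F) : Function.Injective F := fun a b h => by
  apply Subtype.ext
  apply (algebraMap K L).injective
  rw [← hF, ← hF, h]

lemma F_ne_zero (hF : Compat F) {a : ↥V} (ha : a ≠ 0) : F a ≠ 0 := by
  intro h
  exact ha (F_inj hF (by rw [h, map_zero]))

lemma sdvd (x y : ↥S.toSubring) : x ∣ y ∨ y ∣ x :=
  letI : ValuationRing ↥S.toSubring := inferInstanceAs (ValuationRing ↥S)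
  ValuationRing.dvd_total x y

lemma mem_map_iff (I : Ideal ↥V) (x : ↥S.toSubring) :
    x ∈ I.map F ↔ ∃ b ∈ I, F b ∣ x := by
  constructor
  · intro hx
    refine Submodule.span_induction ?_ ?_ ?_ ?_ hx
    · rintro y ⟨b, hb, rfl⟩
      exact ⟨b, hb, dvd_refl _⟩
    · exact ⟨0, I.zero_mem, by rw [map_zero]⟩
    · rintro y z - - ⟨b, hb, hbd⟩ ⟨c, hc, hcd⟩
      rcases ValuationRing.dvd_total b c with h | h
      · exact ⟨b, hb, dvd_add hbd ((map_dvd F h).trans hcd)⟩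
      · exact ⟨c, hc, dvd_add ((map_dvd F h).trans hbd) hcd⟩
    · rintro r y - ⟨b, hb, hbd⟩
      exact ⟨b, hb, hbd.mul_left r⟩
  · rintro ⟨b, hb, c, rfl⟩
    exact Ideal.mul_mem_right _ _ (Ideal.mem_map_of_mem F hb)

lemma dvd_of_F_dvd (hF : Compat F) (hstar : Star V S) {a b : ↥V} (ha : a ≠ 0)
    (h : F a ∣ F b) : a ∣ b := by
  obtain ⟨h', hh⟩ := h
  have hak : (a : K) ≠ 0 := fun h0 => ha (Subtype.ext h0)
  have haL : algebraMap K L (a : K) ≠ 0 := by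
    simpa using hak
  have hcoe : algebraMap K L (b : K) = algebraMap K L (a : K) * (h' : L) := by
    rw [← hF a, ← hF b, hh, Subring.coe_mul]
  have hk : algebraMap K L ((b : K) / (a : K)) ∈ S := by
    rw [map_div₀, hcoe, mul_div_cancel_left₀ _ haL]
    exact h'.2
  have hkV : (b : K) / (a : K) ∈ V := hstar _ hk
  refine ⟨⟨_, hkV⟩, Subtype.ext ?_⟩
  show (b : K) = (a : K) * ((b : K) / (a : K))
  field_simp

lemma isUnit_of_F_dvd_one (hF : Compat F) (hstar : Star V S) {b : ↥V} (h : F b ∣ 1) :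
    IsUnit b := by
  have hb : b ≠ 0 := by
    rintro rfl
    rw [map_zero, zero_dvd_iff] at h
    exact one_ne_zero h
  exact isUnit_of_dvd_one (dvd_of_F_dvd hF hstar hb (by rw [map_one]; exact h))

lemma orContent_eq_span (hF : Compat F) (hstar : Star V S) {a : ↥V} (ha : a ≠ 0)
    (u : (↥S.toSubring)ˣ) :
    ORContent F (F a * ↑u) = Ideal.span {a} := by
  apply le_antisymm
  · exact orContent_le F (Ideal.mul_mem_right _ _
      (Ideal.mem_map_of_mem F (Ideal.subset_span rfl)))
  · rw [Ideal.span_le, Set.singleton_subset_iff, SetLike.mem_coe]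
    refine mem_orContent F fun I hI => ?_
    obtain ⟨b, hbI, hbd⟩ := (mem_map_iff I _).mp hI
    have hb0 : b ≠ 0 := by
      rintro rfl
      rw [map_zero, zero_dvd_iff] at hbd
      exact F_ne_zero hF ha (by
        rcases mul_eq_zero.mp hbd with h | h
        · exact h
        · exact absurd h u.ne_zero)
    have hba : b ∣ a := dvd_of_F_dvd hF hstar hb0 ((Units.dvd_mul_right).mp hbd)
    obtain ⟨c, rfl⟩ := hba
    exact I.mul_mem_right c hbI

lemma orContent_zero : ORContent F (0 : ↥S.toSubring) = ⊥ :=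
  le_antisymm (orContent_le F ((Ideal.map F ⊥).zero_mem)) bot_le

lemma faithfullyFlat_of (hF : Compat F) (hstar : Star V S) : RingHomFaithfullyFlat F := by
  letI := F.toAlgebra
  show Module.FaithfullyFlat ↥V ↥S.toSubring
  rw [Module.FaithfullyFlat.iff_flat_and_ideal_smul_eq_top]
  constructor
  · apply flat_of_principal_torsionfree
    · intro I hI
      exact (IsBezout.isPrincipal_of_FG I hI).1
    · intro a m hm
      rw [Algebra.smul_def, RingHom.algebraMap_toAlgebra] at hm
      rcases mul_eq_zero.mp hm with h | h
      · left; exact F_inj hF (by rw [h, map_zero])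
      · right; exact h
  · intro I hI
    have h1 : (1 : ↥S.toSubring) ∈ I • (⊤ : Submodule ↥V ↥S.toSubring) := by
      rw [hI]; exact Submodule.mem_top
    rw [Ideal.smul_top_eq_map, RingHom.algebraMap_toAlgebra] at h1
    have h1' : (1 : ↥S.toSubring) ∈ Ideal.map F I := h1
    obtain ⟨b, hbI, hb1⟩ := (mem_map_iff I 1).mp h1'
    exact Ideal.eq_top_of_isUnit_mem I hbI (isUnit_of_F_dvd_one hF hstar hb1)

lemma map_top_of_FF (hff : RingHomFaithfullyFlat F) {I : Ideal ↥V}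
    (h : Ideal.map F I = ⊤) : I = ⊤ := by
  letI := F.toAlgebra
  haveI hff' : Module.FaithfullyFlat ↥V ↥S.toSubring := hff
  refine ((Module.FaithfullyFlat.iff_flat_and_ideal_smul_eq_top
    ↥V ↥S.toSubring).mp hff').2 I ?_
  rw [Ideal.smul_top_eq_map, RingHom.algebraMap_toAlgebra, h]
  rfl

lemma exists_max_divisor (hOR : IsOhmRushAlgebra F) (x : ↥S.toSubring) :
    ∃ a₀ : ↥V, F a₀ ∣ x ∧ ∀ b : ↥V, F b ∣ x → b ∣ a₀ := by
  obtain ⟨b, hb, hbd⟩ := (mem_map_iff _ x).mp (hOR x)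
  refine ⟨b, hbd, fun b' hb' => ?_⟩
  have hle : ORContent F x ≤ Ideal.span {b'} :=
    orContent_le F ((mem_map_iff _ x).mpr ⟨b', Ideal.subset_span rfl, hb'⟩)
  exact Ideal.mem_span_singleton.mp (hle hb)

lemma decomp_of_content (hF : Compat F) (hstar : Star V S) (hOR : IsOhmRushAlgebra F)
    (hDM : ∀ s t : ↥S.toSubring, ∃ n : ℕ, 0 < n ∧
      ORContent F s ^ n * ORContent F t = ORContent F s ^ (n - 1) * ORContent F (s * t))
    {π : ↥V} (hπ0 : π ≠ 0) (hπu : ¬IsUnit π) :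
    ∀ s : ↥S.toSubring, s ≠ 0 → ∃ (a : ↥V) (u : (↥S.toSubring)ˣ), s = F a * ↑u := by
  intro s hs
  by_contra hno
  push_neg at hno
  obtain ⟨a₀, ha₀d, ha₀max⟩ := exists_max_divisor hOR s
  obtain ⟨t, ht⟩ := ha₀d
  have ha₀0 : a₀ ≠ 0 := by
    rintro rfl
    rw [map_zero, zero_mul] at ht
    exact hs ht
  have ht0 : t ≠ 0 := by
    rintro rfl
    rw [mul_zero] at ht
    exact hs ht
  have htnu : ¬IsUnit t := by
    intro h
    obtain ⟨u, rfl⟩ := h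
    exact hno a₀ u ht
  have tprop : ∀ b : ↥V, F b ∣ t → IsUnit b := by
    intro b hb
    obtain ⟨h', hh'⟩ := hb
    have h1 : F (b * a₀) ∣ s := ⟨h', by rw [ht, hh', map_mul]; ring⟩
    obtain ⟨c, hc⟩ := ha₀max _ h1
    have h2 : a₀ * 1 = a₀ * (b * c) := by rw [mul_one]; nth_rewrite 1 [hc]; ring
    exact IsUnit.of_mul_eq_one c (mul_left_cancel₀ ha₀0 h2).symm
  have hct : ORContent F t = ⊤ := by
    refine le_antisymm le_top (le_orContent F fun I hI => ?_)
    obtain ⟨b, hbI, hbd⟩ := (mem_map_iff I t).mp hI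
    exact (Ideal.eq_top_of_isUnit_mem I hbI (tprop b hbd)).ge
  have htπ : t ∣ F π := by
    rcases sdvd (F π) t with h | h
    · exact absurd (tprop π h) hπu
    · exact h
  obtain ⟨g, hg⟩ := htπ
  have hFπ0 : F π ≠ 0 := F_ne_zero hF hπ0
  have hg0 : g ≠ 0 := by
    rintro rfl
    rw [mul_zero] at hg
    exact hFπ0 hg
  have hgnd : ∀ b : ↥V, F b ∣ g → ¬ π ∣ b := by
    rintro b hb ⟨d, hd⟩
    obtain ⟨h', hh'⟩ := hb
    have hz : F π * (1 - t * (F d * h')) = 0 := by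
      have hb' : F b = F π * F d := by rw [hd, map_mul]
      calc F π * (1 - t * (F d * h')) = F π - t * (F b * h') := by rw [hb']; ring
      _ = F π - t * g := by rw [← hh']
      _ = 0 := by rw [hg]; ring
    rcases mul_eq_zero.mp hz with h | h
    · exact hFπ0 h
    · have h1 : t * (F d * h') = 1 := by
        have := sub_eq_zero.mp h
        exact this.symm
      exact htnu (IsUnit.of_mul_eq_one _ h1)
  obtain ⟨a₁, ha₁d, ha₁max⟩ := exists_max_divisor hOR g
  have hcg : ORContent F g = Ideal.span {a₁} := by
    apply le_antisymm
    · exact orContent_le F ((mem_map_iff _ g).mpr ⟨a₁, Ideal.subset_span rfl, ha₁d⟩)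
    · rw [Ideal.span_le, Set.singleton_subset_iff, SetLike.mem_coe]
      refine mem_orContent F fun I hI => ?_
      obtain ⟨b, hbI, hbd⟩ := (mem_map_iff I g).mp hI
      obtain ⟨c, rfl⟩ := ha₁max b hbd
      exact I.mul_mem_right c hbI
  have hcπ : ORContent F (t * g) = Ideal.span {π} := by
    rw [← hg]
    have h2 := orContent_eq_span hF hstar hπ0 1
    rwa [Units.val_one, mul_one] at h2
  obtain ⟨n, hn, heq⟩ := hDM t g
  rw [hct, hcg, hcπ, Ideal.top_pow, Ideal.top_pow, Ideal.top_mul, Ideal.top_mul] at heq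
  have ha₁π : a₁ ∈ Ideal.span {π} := by
    rw [← heq]
    exact Ideal.subset_span rfl
  exact hgnd a₁ ha₁d (Ideal.mem_span_singleton.mp ha₁π)

lemma contentAlgebra_of_decomp (hF : Compat F) (hstar : Star V S)
    (hdec : ∀ s : ↥S.toSubring, s ≠ 0 → ∃ (a : ↥V) (u : (↥S.toSubring)ˣ), s = F a * ↑u) :
    IsContentAlgebra F := by
  have hOR : IsOhmRushAlgebra F := by
    intro s
    by_cases hs : s = 0
    · subst hs
      exact (Ideal.map F _).zero_mem
    · obtain ⟨a, u, rfl⟩ := hdec s hs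
      have ha : a ≠ 0 := by
        rintro rfl
        rw [map_zero, zero_mul] at hs
        exact hs rfl
      rw [orContent_eq_span hF hstar ha]
      exact Ideal.mul_mem_right _ _ (Ideal.mem_map_of_mem F (Ideal.subset_span rfl))
  refine ⟨hOR, faithfullyFlat_of hF hstar, ?_⟩
  intro s t
  refine ⟨1, one_pos, ?_⟩
  simp only [pow_one, Nat.sub_self, pow_zero, one_mul]
  by_cases hs : s = 0
  · subst hs
    rw [zero_mul, orContent_zero, Ideal.bot_mul]
  by_cases ht : t = 0
  · subst ht
    rw [mul_zero, orContent_zero, Ideal.mul_bot]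
  obtain ⟨a, u, rfl⟩ := hdec s hs
  obtain ⟨b, w, rfl⟩ := hdec t ht
  have ha : a ≠ 0 := by
    rintro rfl
    rw [map_zero, zero_mul] at hs
    exact hs rfl
  have hb : b ≠ 0 := by
    rintro rfl
    rw [map_zero, zero_mul] at ht
    exact ht rfl
  have hmul : (F a * ↑u) * (F b * ↑w) = F (a * b) * ↑(u * w) := by
    rw [map_mul, Units.val_mul]
    ring
  rw [hmul, orContent_eq_span hF hstar ha u, orContent_eq_span hF hstar hb w,
    orContent_eq_span hF hstar (mul_ne_zero ha hb) (u * w),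
    Ideal.span_singleton_mul_span_singleton]

lemma coe_unit_inv (u : (↥S.toSubring)ˣ) :
    ((↑(u⁻¹) : ↥S.toSubring) : L) = (((u : ↥S.toSubring)) : L)⁻¹ := by
  have h : (((u : ↥S.toSubring)) : L) * ((↑(u⁻¹) : ↥S.toSubring) : L) = 1 := by
    rw [← Subring.coe_mul, u.mul_inv]
    rfl
  exact eq_inv_of_mul_eq_one_right h

lemma memS_of_memT {x : L} (h : x ∈ S.toSubring) : x ∈ S := h

lemma memT_of_memS {x : L} (h : x ∈ S) : x ∈ S.toSubring := h

end ContentAux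

/-- Let `V ⊆ S` be an inclusion of valuation domains (realized as
valuation subrings of their fraction fields `K ⊆ L`), with the maximal ideal of `V`
nonzero.  Then `S` is a content `V`-algebra if and only if the induced homomorphism of
value groups `Kˣ/Vˣ → Lˣ/Sˣ` is an isomorphism. -/
theorem content_iff_valueGroup_iso {K L : Type*} [Field K] [Field L] [Algebra K L]
    (V : ValuationSubring K) (S : ValuationSubring L)
    (hVS : ∀ x : V, algebraMap K L x ∈ S)
    (hm : IsLocalRing.maximalIdeal V ≠ ⊥)
    (hle : V.unitGroup ≤
      S.unitGroup.comap (Units.map (algebraMap K L : K →+* L).toMonoidHom)) :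
    IsContentAlgebra
        (RingHom.codRestrict ((algebraMap K L).comp V.subtype) S.toSubring
          (fun x => hVS x)) ↔
      Function.Bijective
        (QuotientGroup.map V.unitGroup S.unitGroup
          (Units.map (algebraMap K L : K →+* L).toMonoidHom) hle) := by
  set F : ↥V →+* ↥S.toSubring :=
    RingHom.codRestrict ((algebraMap K L).comp V.subtype) S.toSubring (fun x => hVS x) with hFdef
  have hF : ContentAux.Compat F := fun a => rfl
  have hcoeF : ∀ a : ↥V, ((F a : ↥S.toSubring) : L) = algebraMap K L (a : K) := hF
  obtain ⟨π, hπmem, hπ0⟩ := Submodule.exists_mem_ne_zero_of_ne_bot hm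
  have hπu : ¬IsUnit π := by
    have h := hπmem
    rw [IsLocalRing.mem_maximalIdeal, mem_nonunits_iff] at h
    exact h
  constructor
  · rintro ⟨hOR, hFF, hDM⟩
    have hstar : ContentAux.Star V S := by
      intro k hk
      by_contra hkV
      have hk0 : k ≠ 0 := fun h => hkV (h ▸ V.zero_mem)
      have hki : k⁻¹ ∈ V := (V.mem_or_inv_mem k).resolve_left hkV
      have hdvd : F ⟨k⁻¹, hki⟩ ∣ 1 := by
        refine ⟨⟨algebraMap K L k, hk⟩, ?_⟩
        apply Subtype.ext
        rw [Subring.coe_mul, hcoeF]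
        show (1 : L) = algebraMap K L k⁻¹ * algebraMap K L k
        rw [← map_mul, inv_mul_cancel₀ hk0, map_one]
      have hIb : Ideal.map F (Ideal.span {(⟨k⁻¹, hki⟩ : ↥V)}) = ⊤ :=
        Ideal.eq_top_of_isUnit_mem _ (Ideal.mem_map_of_mem F (Ideal.subset_span rfl))
          (isUnit_of_dvd_one hdvd)
      have hbu : IsUnit (⟨k⁻¹, hki⟩ : ↥V) :=
        Ideal.span_singleton_eq_top.mp (ContentAux.map_top_of_FF hFF hIb)
      obtain ⟨c, hc⟩ := hbu.exists_right_inv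
      apply hkV
      have h1 : k⁻¹ * (c : K) = 1 := by
        have h2 := congrArg Subtype.val hc
        push_cast at h2
        exact h2
      have h3 : (c : K) = k := by
        have h4 := eq_inv_of_mul_eq_one_right h1
        rwa [inv_inv] at h4
      rw [← h3]
      exact c.2
    have hdec := ContentAux.decomp_of_content hF hstar hOR hDM hπ0 hπu
    constructor
    · rw [injective_iff_map_eq_one]
      intro q hq
      induction q using QuotientGroup.induction_on with
      | H x =>
        rw [QuotientGroup.map_mk, QuotientGroup.eq_one_iff] at hq
        rw [QuotientGroup.eq_one_iff]
        rw [ContentAux.mem_unitGroup_iff_mem] at hq ⊢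
        obtain ⟨h1, h2⟩ := hq
        constructor
        · apply hstar
          simpa using h1
        · apply hstar
          simpa using h2
    · intro q
      induction q using QuotientGroup.induction_on with
      | H ℓ =>
        rcases S.mem_or_inv_mem (ℓ : L) with hmem | hmem
        · have hs0 : (⟨(ℓ : L), hmem⟩ : ↥S.toSubring) ≠ 0 := by
            intro h
            exact ℓ.ne_zero (congrArg Subtype.val h)
          obtain ⟨a, u, hsa⟩ := hdec _ hs0
          have ha : a ≠ 0 := by
            rintro rfl
            rw [map_zero, zero_mul] at hsa
            exact hs0 hsa
          have haK : (a : K) ≠ 0 := fun h => ha (Subtype.ext h)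
          have halg0 : algebraMap K L (a : K) ≠ 0 := by simpa using haK
          have hcoe : (ℓ : L) = algebraMap K L (a : K) * ((u : ↥S.toSubring) : L) := by
            have h5 := congrArg Subtype.val hsa
            rw [Subring.coe_mul, hcoeF] at h5
            exact h5
          have hu0 : ((u : ↥S.toSubring) : L) ≠ 0 := by
            intro h
            exact ℓ.ne_zero (by rw [hcoe, h, mul_zero])
          refine ⟨QuotientGroup.mk (Units.mk0 (a : K) haK), ?_⟩
          rw [QuotientGroup.map_mk, QuotientGroup.eq, ContentAux.mem_unitGroup_iff_mem]
          constructor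
          · have h6 : ((((Units.map (algebraMap K L : K →+* L).toMonoidHom
                (Units.mk0 (a : K) haK))⁻¹ * ℓ : Lˣ)) : L)
                = ((u : ↥S.toSubring) : L) := by
              simp only [Units.val_mul, Units.val_inv_eq_inv_val, Units.coe_map,
                Units.val_mk0, RingHom.toMonoidHom_eq_coe, MonoidHom.coe_coe]
              rw [hcoe]
              field_simp
            rw [h6]
            exact ContentAux.memS_of_memT (u : ↥S.toSubring).2
          · have h7 : (((((Units.map (algebraMap K L : K →+* L).toMonoidHom
                (Units.mk0 (a : K) haK))⁻¹ * ℓ)⁻¹ : Lˣ)) : L)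
                = ((↑(u⁻¹) : ↥S.toSubring) : L) := by
              rw [ContentAux.coe_unit_inv]
              simp only [Units.val_inv_eq_inv_val, Units.val_mul, Units.coe_map,
                Units.val_mk0, RingHom.toMonoidHom_eq_coe, MonoidHom.coe_coe]
              rw [hcoe]
              field_simp
            rw [h7]
            exact ContentAux.memS_of_memT (↑(u⁻¹) : ↥S.toSubring).2
        · have hs0 : (⟨(ℓ : L)⁻¹, hmem⟩ : ↥S.toSubring) ≠ 0 := by
            intro h
            have h' : ((ℓ : L))⁻¹ = (0 : L) := congrArg Subtype.val h
            rw [inv_eq_zero] at h'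
            exact ℓ.ne_zero h'
          obtain ⟨a, u, hsa⟩ := hdec _ hs0
          have ha : a ≠ 0 := by
            rintro rfl
            rw [map_zero, zero_mul] at hsa
            exact hs0 hsa
          have haK : (a : K) ≠ 0 := fun h => ha (Subtype.ext h)
          have halg0 : algebraMap K L (a : K) ≠ 0 := by simpa using haK
          have hcoe : (ℓ : L)⁻¹ = algebraMap K L (a : K) * ((u : ↥S.toSubring) : L) := by
            have h5 := congrArg Subtype.val hsa
            rw [Subring.coe_mul, hcoeF] at h5
            exact h5
          have hu0 : ((u : ↥S.toSubring) : L) ≠ 0 := by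
            intro h
            rw [h, mul_zero, inv_eq_zero] at hcoe
            exact ℓ.ne_zero hcoe
          have h8 : algebraMap K L (a : K) * (ℓ : L) = (((u : ↥S.toSubring) : L))⁻¹ := by
            apply eq_inv_of_mul_eq_one_left
            rw [mul_comm (algebraMap K L (a : K)) ((ℓ : L))]
            rw [mul_assoc, ← hcoe]
            exact mul_inv_cancel₀ ℓ.ne_zero
          refine ⟨QuotientGroup.mk ((Units.mk0 (a : K) haK)⁻¹), ?_⟩
          rw [QuotientGroup.map_mk, QuotientGroup.eq, ContentAux.mem_unitGroup_iff_mem]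
          constructor
          · have h6 : ((((Units.map (algebraMap K L : K →+* L).toMonoidHom
                ((Units.mk0 (a : K) haK)⁻¹))⁻¹ * ℓ : Lˣ)) : L)
                = ((↑(u⁻¹) : ↥S.toSubring) : L) := by
              rw [ContentAux.coe_unit_inv]
              simp only [map_inv, inv_inv, Units.val_mul, Units.coe_map,
                Units.val_mk0, RingHom.toMonoidHom_eq_coe, MonoidHom.coe_coe]
              rw [← h8]
            rw [h6]
            exact ContentAux.memS_of_memT (↑(u⁻¹) : ↥S.toSubring).2
          · have h7 : (((((Units.map (algebraMap K L : K →+* L).toMonoidHom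
                ((Units.mk0 (a : K) haK)⁻¹))⁻¹ * ℓ)⁻¹ : Lˣ)) : L)
                = ((u : ↥S.toSubring) : L) := by
              simp only [map_inv, inv_inv, Units.val_inv_eq_inv_val, Units.val_mul,
                Units.coe_map, Units.val_mk0, RingHom.toMonoidHom_eq_coe, MonoidHom.coe_coe]
              rw [h8, inv_inv]
            rw [h7]
            exact ContentAux.memS_of_memT (u : ↥S.toSubring).2
  · intro hbij
    have hstar : ContentAux.Star V S := by
      intro k hk
      by_contra hkV
      have hk0 : k ≠ 0 := fun h => hkV (h ▸ V.zero_mem)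
      have hki : k⁻¹ ∈ V := (V.mem_or_inv_mem k).resolve_left hkV
      have hmemS : Units.map (algebraMap K L : K →+* L).toMonoidHom (Units.mk0 k hk0)
          ∈ S.unitGroup := by
        rw [ContentAux.mem_unitGroup_iff_mem]
        constructor
        · simpa using hk
        · have h9 := hVS ⟨k⁻¹, hki⟩
          simpa [map_inv₀] using h9
      have h1 : QuotientGroup.map V.unitGroup S.unitGroup
          (Units.map (algebraMap K L : K →+* L).toMonoidHom) hle
          (QuotientGroup.mk (Units.mk0 k hk0)) = 1 := by
        rw [QuotientGroup.map_mk, QuotientGroup.eq_one_iff]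
        exact hmemS
      have h2 : (QuotientGroup.mk (Units.mk0 k hk0) : Kˣ ⧸ V.unitGroup) = 1 :=
        hbij.1 (by rw [h1, map_one])
      rw [QuotientGroup.eq_one_iff, ContentAux.mem_unitGroup_iff_mem] at h2
      exact hkV h2.1
    have hdec : ∀ s : ↥S.toSubring, s ≠ 0 →
        ∃ (a : ↥V) (u : (↥S.toSubring)ˣ), s = F a * ↑u := by
      intro s hs
      have hsL : (s : L) ≠ 0 := fun h => hs (Subtype.ext h)
      obtain ⟨q, hq⟩ := hbij.2 (QuotientGroup.mk (Units.mk0 (s : L) hsL))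
      obtain ⟨k, rfl⟩ := QuotientGroup.mk_surjective q
      rw [QuotientGroup.map_mk, QuotientGroup.eq, ContentAux.mem_unitGroup_iff_mem] at hq
      obtain ⟨hw1, hw2⟩ := hq
      set w : Lˣ := (Units.map (algebraMap K L : K →+* L).toMonoidHom k)⁻¹
        * Units.mk0 (s : L) hsL with hwdef
      have hwval : (w : L) = (algebraMap K L (k : K))⁻¹ * (s : L) := by
        simp only [hwdef, Units.val_mul, Units.val_inv_eq_inv_val, Units.coe_map,
          Units.val_mk0, RingHom.toMonoidHom_eq_coe, MonoidHom.coe_coe]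
      have halg0 : algebraMap K L (k : K) ≠ 0 := by
        simp [k.ne_zero]
      have halgk : algebraMap K L (k : K) ∈ S := by
        have h10 : algebraMap K L (k : K) = (s : L) * ((w⁻¹ : Lˣ) : L) := by
          rw [Units.val_inv_eq_inv_val, hwval]
          field_simp
        rw [h10]
        exact ContentAux.memS_of_memT
          (S.toSubring.mul_mem s.2 (ContentAux.memT_of_memS hw2))
      have hkV : (k : K) ∈ V := hstar _ halgk
      refine ⟨⟨(k : K), hkV⟩,
        ⟨⟨(w : L), ContentAux.memT_of_memS hw1⟩,
         ⟨((w⁻¹ : Lˣ) : L), ContentAux.memT_of_memS hw2⟩, ?_, ?_⟩, ?_⟩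
      · apply Subtype.ext
        rw [Subring.coe_mul]
        show (w : L) * ((w⁻¹ : Lˣ) : L) = ((1 : ↥S.toSubring) : L)
        rw [w.mul_inv]
        rfl
      · apply Subtype.ext
        rw [Subring.coe_mul]
        show ((w⁻¹ : Lˣ) : L) * (w : L) = ((1 : ↥S.toSubring) : L)
        rw [w.inv_mul]
        rfl
      · apply Subtype.ext
        rw [Subring.coe_mul, hcoeF]
        show (s : L) = algebraMap K L (k : K) * (w : L)
        rw [hwval]
        field_simp
    exact ContentAux.contentAlgebra_of_decomp hF hstar hdec
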